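/- arXiv:1703.04326 — 3 statements merged into one kernel-verified Lean document; each statement's English description precedes it below -/
import Mathlib

section
/- Let u ∈ 𝒜(ℝⁿ) ∩ C²(ℝⁿ) be convex. Then for all x = (x₁,…,xₙ) ∈ [0,∞)ⁿ with x ≠ 0, (u[e])*(x) + (u*[e])*(x) = Σ_{1≤j≤n, x_j≠0} (x_j·ln x_j − x_j), and (u[e])*(0) + (u*[e])*(0) = 0. -/
open Filter
open scoped BigOperators Topology

noncomputable section

abbrev En (n : ℕ) := EuclideanSpace ℝ (Fin n)

/-- The closed positive orthant `[0,∞)ⁿ`. -/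
def orthant (n : ℕ) : Set (En n) := {x | ∀ j, 0 ≤ x j}

/-- `g[e]`, the coordinatewise exponential substitution `g[e](x) = g(e^{x₁},…,e^{xₙ})`. -/
def expComp {n : ℕ} (g : En n → ℝ) : En n → ℝ := fun x => g (WithLp.toLp 2 (fun j => Real.exp (x j)))

/-- The Young–Fenchel conjugate `g*(x) = sup_y (⟨x,y⟩ - g(y))`. -/
def starC {n : ℕ} (g : En n → ℝ) (x : En n) : ℝ := ⨆ y : En n, (∑ j, x j * y j - g y)

/-- `g ∈ ℬ(ℝⁿ)`: `g` is continuous on `ℝⁿ` and `g(x)/‖x‖ → +∞` as `x → ∞`. -/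
def memBR {n : ℕ} (g : En n → ℝ) : Prop :=
  Continuous g ∧ Tendsto (fun x : En n => g x / ‖x‖) (cocompact (En n)) atTop

/-- `g ∈ 𝒜(ℝⁿ)`: `g` is continuous, depends only on the absolute values of the
coordinates, is nondecreasing in each variable on the orthant, and `g(x)/‖x‖ → +∞`. -/
def IsA {n : ℕ} (g : En n → ℝ) : Prop :=
  Continuous g ∧ (∀ x : En n, g x = g (WithLp.toLp 2 (fun j => |x j|))) ∧
  (∀ x y : En n, (∀ j, 0 ≤ x j) → (∀ j, x j ≤ y j) → g x ≤ g y) ∧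
  Tendsto (fun x : En n => g x / ‖x‖) (cocompact (En n)) atTop

variable {n : ℕ}

instance instCoeFunToEn {n : ℕ} : Coe (Fin n → ℝ) (En n) := ⟨WithLp.toLp 2⟩

lemma coord_abs_le (y : En n) (j : Fin n) : |y j| ≤ ‖y‖ := by
  rw [EuclideanSpace.norm_eq]
  calc |y j| = Real.sqrt (|y j| ^ 2) := by rw [Real.sqrt_sq (abs_nonneg _)]
  _ ≤ _ := by
      apply Real.sqrt_le_sqrt
      have := Finset.single_le_sum (f := fun i => ‖y i‖ ^ 2) (fun i _ => sq_nonneg _)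
        (Finset.mem_univ j)
      simpa [Real.norm_eq_abs] using this

lemma sum_mul_le_norm (s y : En n) : ∑ j, s j * y j ≤ ‖s‖ * ‖y‖ := by
  have h := real_inner_le_norm s y
  simpa only [PiLp.inner_apply, Real.inner_apply] using h

lemma superlinear_bound (u : En n → ℝ) (hc : Continuous u)
    (h : Tendsto (fun x : En n => u x / ‖x‖) (cocompact (En n)) atTop) (M : ℝ) :
    ∃ A : ℝ, 0 ≤ A ∧ ∀ t, M * ‖t‖ - A ≤ u t := by
  have hev : {x : En n | M ≤ u x / ‖x‖} ∈ cocompact (En n) :=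
    h.eventually (eventually_ge_atTop M)
  obtain ⟨K, hK, hKs⟩ := mem_cocompact.mp hev
  have hK' : IsCompact (K ∪ {0}) := hK.union isCompact_singleton
  obtain ⟨r, hr⟩ := hK'.isBounded.subset_closedBall 0
  obtain ⟨z, hz, hzmin⟩ := hK'.exists_isMinOn (by simp) hc.continuousOn
  set B := u z with hB
  refine ⟨max (|M| * max r 0 - B) 0, le_max_right _ _, fun t => ?_⟩
  by_cases ht : t ∈ K ∪ {0}
  · have h1 : ‖t‖ ≤ max r 0 := by
      have := hr ht
      simp only [Metric.mem_closedBall, dist_zero_right] at this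
      exact this.trans (le_max_left _ _)
    have h2 : B ≤ u t := hzmin ht
    have h3 : M * ‖t‖ ≤ |M| * max r 0 := by
      calc M * ‖t‖ ≤ |M| * ‖t‖ := mul_le_mul_of_nonneg_right (le_abs_self M) (norm_nonneg _)
      _ ≤ |M| * max r 0 := mul_le_mul_of_nonneg_left h1 (abs_nonneg _)
    have := le_max_left (|M| * max r 0 - B) 0
    linarith
  · have ht0 : t ≠ 0 := fun h0 => ht (Or.inr (by simp [h0]))
    have hn : 0 < ‖t‖ := norm_pos_iff.mpr ht0
    have hm : M ≤ u t / ‖t‖ := hKs (fun hK2 => ht (Or.inl hK2))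
    have := (le_div_iff₀ hn).mp hm
    have h0 : (0:ℝ) ≤ max (|M| * max r 0 - B) 0 := le_max_right _ _
    linarith

lemma starC_le {g : En n → ℝ} {x : En n} {a : ℝ}
    (h : ∀ y : En n, ∑ j, x j * y j - g y ≤ a) : starC g x ≤ a := ciSup_le h

lemma le_starC {g : En n → ℝ} {x : En n}
    (hb : BddAbove (Set.range fun y : En n => ∑ j, x j * y j - g y)) (y : En n) :
    ∑ j, x j * y j - g y ≤ starC g x := le_ciSup hb y

lemma star_bddAbove (u : En n → ℝ) (hc : Continuous u)
    (h : Tendsto (fun x : En n => u x / ‖x‖) (cocompact (En n)) atTop) (s : En n) :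
    BddAbove (Set.range fun y : En n => ∑ j, s j * y j - u y) := by
  obtain ⟨A, hA0, hA⟩ := superlinear_bound u hc h (‖s‖ + 1)
  refine ⟨A, fun v hv => ?_⟩
  obtain ⟨y, rfl⟩ := hv
  have h1 := sum_mul_le_norm s y
  have h2 := hA y
  have h3 : (0:ℝ) ≤ ‖y‖ := norm_nonneg _
  have h4 : (‖s‖ + 1) * ‖y‖ = ‖s‖ * ‖y‖ + ‖y‖ := by ring
  simp only [Set.mem_setOf_eq]
  linarith

lemma le_starC' (u : En n → ℝ) (hc : Continuous u)
    (h : Tendsto (fun x : En n => u x / ‖x‖) (cocompact (En n)) atTop) (s y : En n) :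
    ∑ j, s j * y j - u y ≤ starC u s := le_starC (star_bddAbove u hc h s) y

lemma decomp_single (x : En n) :
    ∑ j, x j • (EuclideanSpace.single j (1:ℝ)) = x := by
  ext k
  have : (∑ j, x j • (EuclideanSpace.single j (1:ℝ))) k
      = ∑ j, (x j • (EuclideanSpace.single j (1:ℝ))) k := by
    rw [WithLp.ofLp_sum, Finset.sum_apply]
  rw [this]
  simp [EuclideanSpace.single_apply]

lemma clm_apply_eq_sum (f : En n →L[ℝ] ℝ) (v : En n) :
    f v = ∑ j, v j * f (EuclideanSpace.single j (1:ℝ)) := by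
  conv_lhs => rw [← decomp_single v]
  rw [map_sum]
  congr 1; ext j
  rw [f.map_smul, smul_eq_mul]

/-- gradient inequality for convex differentiable functions -/
lemma convex_grad_ineq (u : En n → ℝ) (hconv : ConvexOn ℝ Set.univ u)
    (hdiff : Differentiable ℝ u) (t y : En n) :
    u t + fderiv ℝ u t (y - t) ≤ u y := by
  rcases eq_or_ne y t with rfl | hyt
  · simp
  · set g : ℝ → ℝ := fun θ => u (t + θ • (y - t)) with hg
    have hgconv : ConvexOn ℝ Set.univ g := by
      have := hconv.comp_affineMap (AffineMap.lineMap t y)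
      have heq : g = u ∘ (AffineMap.lineMap t y) := by
        funext θ
        simp [g, AffineMap.lineMap_apply, add_comm, vsub_eq_sub, vadd_eq_add]
      rw [heq]
      simpa using this
    have hcurve : HasDerivAt (fun θ : ℝ => t + θ • (y - t)) (y - t) 0 := by
      simpa using ((hasDerivAt_id (0:ℝ)).smul_const (y - t)).const_add t
    have hg0 : HasDerivAt g (fderiv ℝ u t (y - t)) 0 := by
      have ht' : HasFDerivAt u (fderiv ℝ u t) (t + (0:ℝ) • (y - t)) := by
        simpa using (hdiff t).hasFDerivAt
      have := ht'.comp_hasDerivAt 0 hcurve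
      exact this
    have := hgconv.le_slope_of_hasDerivAt (Set.mem_univ 0) (Set.mem_univ 1) zero_lt_one hg0
    rw [slope_def_field] at this
    have hg1 : g 1 = u y := by simp [g]
    have hg00 : g 0 = u t := by simp [g]
    rw [hg1, hg00] at this
    simp only [sub_zero, div_one] at this
    linarith

/-- Fenchel equality at a gradient point -/
lemma fenchel_eq (u : En n → ℝ) (hconv : ConvexOn ℝ Set.univ u)
    (hdiff : Differentiable ℝ u) (t : En n) :
    starC u (fun j => fderiv ℝ u t (EuclideanSpace.single j (1:ℝ)))
      = (∑ j, fderiv ℝ u t (EuclideanSpace.single j (1:ℝ)) * t j) - u t := by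
  set s : En n := WithLp.toLp 2 (fun j => fderiv ℝ u t (EuclideanSpace.single j (1:ℝ))) with hs
  have hub : ∀ y : En n, ∑ j, s j * y j - u y ≤ (∑ j, s j * t j) - u t := by
    intro y
    have h1 := convex_grad_ineq u hconv hdiff t y
    have h2 : fderiv ℝ u t (y - t) = ∑ j, (y j - t j) * s j := by
      rw [clm_apply_eq_sum]
      refine Finset.sum_congr rfl fun j _ => ?_
      rw [PiLp.sub_apply]
    rw [h2] at h1
    have h3 : ∑ j, (y j - t j) * s j = ∑ j, s j * y j - ∑ j, s j * t j := by
      rw [← Finset.sum_sub_distrib]; congr 1; ext j; ring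
    rw [h3] at h1
    linarith
  have hbdd : BddAbove (Set.range fun y : En n => ∑ j, s j * y j - u y) :=
    ⟨(∑ j, s j * t j) - u t, fun v hv => by obtain ⟨y, rfl⟩ := hv; exact hub y⟩
  apply le_antisymm
  · exact starC_le hub
  · exact le_starC hbdd t

/-- partial derivatives of a coordinatewise-monotone function are nonneg on the orthant -/
lemma partial_nonneg (u : En n → ℝ)
    (hmono : ∀ x y : En n, (∀ j, 0 ≤ x j) → (∀ j, x j ≤ y j) → u x ≤ u y)
    (hdiff : Differentiable ℝ u) (t : En n) (ht : ∀ j, 0 ≤ t j) (j : Fin n) :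
    0 ≤ fderiv ℝ u t (EuclideanSpace.single j (1:ℝ)) := by
  set f : ℝ → ℝ := fun h => u (t + h • EuclideanSpace.single j (1:ℝ)) with hf
  have hd : HasDerivAt f (fderiv ℝ u t (EuclideanSpace.single j (1:ℝ))) 0 := by
    have hcurve : HasDerivAt (fun h : ℝ => t + h • EuclideanSpace.single j (1:ℝ))
        (EuclideanSpace.single j (1:ℝ)) 0 := by
      simpa using ((hasDerivAt_id (0:ℝ)).smul_const (EuclideanSpace.single j (1:ℝ))).const_add t
    have ht' : HasFDerivAt u (fderiv ℝ u t) (t + (0:ℝ) • EuclideanSpace.single j (1:ℝ)) := by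
      simpa using (hdiff t).hasFDerivAt
    exact ht'.comp_hasDerivAt 0 hcurve
  have hslope : Tendsto (slope f 0) (𝓝[>] (0:ℝ))
      (𝓝 (fderiv ℝ u t (EuclideanSpace.single j (1:ℝ)))) :=
    (hasDerivAt_iff_tendsto_slope.mp hd).mono_left
      (nhdsWithin_mono 0 (fun x hx => ne_of_gt hx))
  refine ge_of_tendsto hslope ?_
  filter_upwards [self_mem_nhdsWithin] with h hh
  have hh0 : (0:ℝ) < h := hh
  have hmon : f 0 ≤ f h := by
    apply hmono _ _ (by simpa [f] using ht)
    intro k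
    simp only [PiLp.add_apply, PiLp.smul_apply, EuclideanSpace.single_apply, smul_eq_mul]
    rcases eq_or_ne k j with rfl | hkj
    · simp; positivity
    · simp [hkj]
  rw [slope_def_field]
  simp only [sub_zero]
  apply div_nonneg _ hh0.le
  simpa [f] using hmon

lemma starC_mono (u : En n → ℝ) (hc : Continuous u)
    (habs : ∀ x : En n, u x = u (fun j => |x j|))
    (hsl : Tendsto (fun x : En n => u x / ‖x‖) (cocompact (En n)) atTop)
    {a b : En n} (ha : ∀ j, 0 ≤ a j) (hab : ∀ j, a j ≤ b j) :
    starC u a ≤ starC u b := by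
  apply starC_le
  intro y
  have key : ∑ j, a j * y j - u y ≤ ∑ j, b j * |y j| - u (fun k => |y k|) := by
    rw [← habs y]
    have : ∑ j, a j * y j ≤ ∑ j, b j * |y j| := by
      apply Finset.sum_le_sum
      intro j _
      calc a j * y j ≤ a j * |y j| := mul_le_mul_of_nonneg_left (le_abs_self _) (ha j)
      _ ≤ b j * |y j| := mul_le_mul_of_nonneg_right (hab j) (abs_nonneg _)
    linarith
  exact key.trans (le_starC' u hc hsl b (fun k => |y k|))

lemma starC_perturb (u : En n → ℝ) (hc : Continuous u)
    (hsl : Tendsto (fun x : En n => u x / ‖x‖) (cocompact (En n)) atTop) (sh : En n) :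
    ∃ K : ℝ, 0 ≤ K ∧ ∀ δ : ℝ, 0 < δ → δ ≤ 1 → ∀ s' : En n,
      (∀ j, sh j ≤ s' j ∧ s' j ≤ sh j + δ) → starC u s' ≤ starC u sh + δ * K := by
  obtain ⟨A, hA0, hA⟩ := superlinear_bound u hc hsl (‖sh‖ + n + 1)
  set K₁ : ℝ := A + |u 0| with hK₁
  have hK₁0 : 0 ≤ K₁ := by positivity
  refine ⟨n * K₁, by positivity, fun δ hδ0 hδ1 s' hs' => ?_⟩
  apply starC_le
  intro y
  have hsplit : ∑ j, s' j * y j ≤ ∑ j, sh j * y j + δ * (n * ‖y‖) := by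
    have h1 : ∑ j, s' j * y j - ∑ j, sh j * y j = ∑ j, (s' j - sh j) * y j := by
      rw [← Finset.sum_sub_distrib]; congr 1; ext j; ring
    have h2 : ∑ j, (s' j - sh j) * y j ≤ ∑ _j : Fin n, δ * ‖y‖ := by
      apply Finset.sum_le_sum
      intro j _
      calc (s' j - sh j) * y j ≤ |(s' j - sh j) * y j| := le_abs_self _
      _ = |s' j - sh j| * |y j| := abs_mul _ _
      _ ≤ δ * ‖y‖ := by
          apply mul_le_mul _ (coord_abs_le y j) (abs_nonneg _) hδ0.le
          rw [abs_le]; constructor <;> [linarith [(hs' j).1, (hs' j).2]; linarith [(hs' j).1, (hs' j).2]]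
    have h3 : ∑ _j : Fin n, δ * ‖y‖ = n * (δ * ‖y‖) := by
      rw [Finset.sum_const, Finset.card_univ, Fintype.card_fin, nsmul_eq_mul]
    linarith [h2.trans_eq h3]
  have hstar0 : -|u 0| ≤ starC u sh := by
    have := le_starC' u hc hsl sh 0
    have h0 : ∑ j, sh j * (0:En n) j - u 0 = - u 0 := by simp
    rw [h0] at this
    have : -|u 0| ≤ -u 0 := by simp [neg_le_neg_iff.mpr (le_abs_self (u 0))]
    linarith [le_starC' u hc hsl sh 0, h0 ▸ (le_starC' u hc hsl sh 0)]
  by_cases hy : ‖y‖ ≤ K₁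
  · have hbase : ∑ j, sh j * y j - u y ≤ starC u sh := le_starC' u hc hsl sh y
    have : δ * (n * ‖y‖) ≤ δ * (n * K₁) := by
      apply mul_le_mul_of_nonneg_left _ hδ0.le
      apply mul_le_mul_of_nonneg_left hy (by positivity)
    linarith
  · push_neg at hy
    have hcs := sum_mul_le_norm sh y
    have hAy := hA y
    have hny : (0:ℝ) ≤ ‖y‖ := norm_nonneg _
    -- ∑ s' y - u y ≤ ‖sh‖‖y‖ + δ n ‖y‖ - ((‖sh‖+n+1)‖y‖ - A) = (δ-1) n ‖y‖ - ‖y‖ + A ≤ -‖y‖ + A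
    have hsum : ∑ j, s' j * y j - u y ≤ -‖y‖ + A := by
      have hexp : (‖sh‖ + n + 1) * ‖y‖ = ‖sh‖ * ‖y‖ + n * ‖y‖ + ‖y‖ := by ring
      have hδn : δ * (n * ‖y‖) ≤ n * ‖y‖ := by
        have : δ * (n * ‖y‖) ≤ 1 * (n * ‖y‖) :=
          mul_le_mul_of_nonneg_right hδ1 (by positivity)
        linarith
      linarith
    have : -‖y‖ + A ≤ -K₁ + A := by linarith
    have hfin : -K₁ + A = -|u 0| := by rw [hK₁]; ring
    have : ∑ j, s' j * y j - u y ≤ starC u sh := by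
      calc ∑ j, s' j * y j - u y ≤ -K₁ + A := by linarith
      _ = -|u 0| := hfin
      _ ≤ starC u sh := hstar0
    have hpos : 0 ≤ δ * (n * K₁) := by positivity
    linarith

lemma xlog_ineq {x c : ℝ} (hx : 0 < x) : x * c - Real.exp c ≤ x * Real.log x - x := by
  have h1 : Real.log (Real.exp c / x) ≤ Real.exp c / x - 1 :=
    Real.log_le_sub_one_of_pos (by positivity)
  rw [Real.log_div (Real.exp_ne_zero c) hx.ne', Real.log_exp] at h1
  have h2 : x * (c - Real.log x) ≤ x * (Real.exp c / x - 1) :=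
    mul_le_mul_of_nonneg_left h1 hx.le
  have h3 : x * (Real.exp c / x) = Real.exp c := by field_simp
  nlinarith

lemma pairing_bound (u : En n → ℝ) (hc : Continuous u)
    (hsl : Tendsto (fun x : En n => u x / ‖x‖) (cocompact (En n)) atTop)
    (x : En n) (hx : ∀ j, 0 ≤ x j) (a b : En n) :
    (∑ j, x j * a j - expComp u a) + (∑ j, x j * b j - expComp (starC u) b) ≤
      ∑ j ∈ Finset.univ.filter (fun j : Fin n => x j ≠ 0), (x j * Real.log (x j) - x j) := by
  have hstar : (∑ j, Real.exp (b j) * Real.exp (a j)) - expComp u a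
      ≤ expComp (starC u) b := by
    simp only [expComp]
    exact le_starC' u hc hsl (fun j => Real.exp (b j)) (fun j => Real.exp (a j))
  have hkey : (∑ j, x j * a j) + (∑ j, x j * b j) - (∑ j, Real.exp (b j) * Real.exp (a j))
      ≤ ∑ j ∈ Finset.univ.filter (fun j : Fin n => x j ≠ 0), (x j * Real.log (x j) - x j) := by
    have hterm : ∀ j : Fin n, x j * a j + x j * b j - Real.exp (b j) * Real.exp (a j)
        ≤ if x j ≠ 0 then x j * Real.log (x j) - x j else 0 := by
      intro j
      by_cases hj : x j = 0
      · simp [hj]; positivity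
      · have hxj : 0 < x j := lt_of_le_of_ne (hx j) (Ne.symm hj)
        have := xlog_ineq (c := a j + b j) hxj
        rw [if_pos hj]
        have hee : Real.exp (b j) * Real.exp (a j) = Real.exp (a j + b j) := by
          rw [← Real.exp_add]; ring_nf
        nlinarith [this]
    calc (∑ j, x j * a j) + (∑ j, x j * b j) - (∑ j, Real.exp (b j) * Real.exp (a j))
        = ∑ j, (x j * a j + x j * b j - Real.exp (b j) * Real.exp (a j)) := by
          rw [← Finset.sum_add_distrib, ← Finset.sum_sub_distrib]
      _ ≤ ∑ j, (if x j ≠ 0 then x j * Real.log (x j) - x j else 0) :=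
          Finset.sum_le_sum (fun j _ => hterm j)
      _ = _ := by rw [Finset.sum_ite, Finset.sum_const_zero, add_zero]
  simp only [expComp] at *
  linarith

lemma box_compact (lo hi : ℝ) : IsCompact {p : En n | ∀ k, p k ∈ Set.Icc lo hi} := by
  apply Metric.isCompact_of_isClosed_isBounded
  · have : {p : En n | ∀ k, p k ∈ Set.Icc lo hi}
        = ⋂ k, (fun p : En n => p k) ⁻¹' (Set.Icc lo hi) := by
      ext p; simp [Set.mem_iInter]
    rw [this]
    exact isClosed_iInter fun k => isClosed_Icc.preimage (by fun_prop)
  · rw [isBounded_iff_forall_norm_le]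
    refine ⟨Real.sqrt (n * (max |lo| |hi|) ^ 2), fun p hp => ?_⟩
    rw [EuclideanSpace.norm_eq]
    apply Real.sqrt_le_sqrt
    have hbd : ∀ k, ‖p k‖ ^ 2 ≤ (max |lo| |hi|) ^ 2 := by
      intro k
      have h1 := (hp k).1
      have h2 := (hp k).2
      have habs : |p k| ≤ max |lo| |hi| := by
        rw [abs_le]
        constructor
        · calc -(max |lo| |hi|) ≤ -|lo| := by simp [le_max_left]
          _ ≤ lo := neg_abs_le lo
          _ ≤ p k := h1
        · calc p k ≤ hi := h2
          _ ≤ |hi| := le_abs_self hi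
          _ ≤ max |lo| |hi| := le_max_right _ _
      rw [Real.norm_eq_abs]
      exact pow_le_pow_left₀ (abs_nonneg _) habs 2
    calc ∑ k, ‖p k‖ ^ 2 ≤ ∑ _k : Fin n, (max |lo| |hi|) ^ 2 :=
          Finset.sum_le_sum fun k _ => hbd k
    _ = n * (max |lo| |hi|) ^ 2 := by
        rw [Finset.sum_const, Finset.card_univ, Fintype.card_fin, nsmul_eq_mul]

set_option maxHeartbeats 1000000 in
lemma lower_bound (u : En n → ℝ) (hc : Continuous u)
    (habs : ∀ x : En n, u x = u (fun j => |x j|))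
    (hmono : ∀ x y : En n, (∀ j, 0 ≤ x j) → (∀ j, x j ≤ y j) → u x ≤ u y)
    (hsl : Tendsto (fun x : En n => u x / ‖x‖) (cocompact (En n)) atTop)
    (hC2 : ContDiff ℝ 2 u) (hconv : ConvexOn ℝ Set.univ u)
    (x : En n) (hx : ∀ j, 0 ≤ x j) (ε : ℝ) (hε : 0 < ε) :
    ∃ a b : En n,
      (∑ j ∈ Finset.univ.filter (fun j : Fin n => x j ≠ 0), (x j * Real.log (x j) - x j)) - ε
      ≤ (∑ j, x j * a j - expComp u a) + (∑ j, x j * b j - expComp (starC u) b) := by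
  have hdiff : Differentiable ℝ u := hC2.differentiable (by norm_num)
  set pd : En n → Fin n → ℝ := fun p j => fderiv ℝ u p (EuclideanSpace.single j (1:ℝ)) with hpd_def
  -- constants
  set D : ℝ := |u (WithLp.toLp 2 (fun _ => (1:ℝ)))| with hD_def
  set Sx : ℝ := ∑ j, x j with hSx_def
  have hSx0 : 0 ≤ Sx := Finset.sum_nonneg fun j _ => hx j
  obtain ⟨A, hA0, hA⟩ := superlinear_bound u hc hsl (Sx + 1)
  set R : ℝ := Real.log (A + D + 1) + 1 with hR_def
  have hD0 : (0:ℝ) ≤ D := abs_nonneg _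
  have hAD1 : (1:ℝ) ≤ A + D + 1 := by linarith
  have hR1 : (1:ℝ) ≤ R := by
    have := Real.log_nonneg hAD1
    simp only [hR_def]; linarith
  have hR0 : (0:ℝ) ≤ R := by linarith
  have heR : A + D + 1 ≤ Real.exp R := by
    rw [hR_def, Real.exp_add, Real.exp_log (by linarith)]
    nlinarith [Real.exp_one_gt_d9, Real.exp_pos (1:ℝ)]
  -- the compact box for t-values and the gradient bound G
  set Bt : Set (En n) := {p : En n | ∀ k, p k ∈ Set.Icc (0:ℝ) (Real.exp R)} with hBt_def
  obtain ⟨G₀, hG₀⟩ := (box_compact (0:ℝ) (Real.exp R)).exists_bound_of_continuousOn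
    ((hC2.continuous_fderiv (by norm_num)).continuousOn (s := Bt))
  set G : ℝ := max G₀ 0 with hG_def
  have hG0 : 0 ≤ G := le_max_right _ _
  have hpdG : ∀ p ∈ Bt, ∀ j, |pd p j| ≤ G := by
    intro p hp j
    have h1 : ‖fderiv ℝ u p (EuclideanSpace.single j (1:ℝ))‖
        ≤ ‖fderiv ℝ u p‖ * ‖EuclideanSpace.single j (1:ℝ)‖ :=
      (fderiv ℝ u p).le_opNorm _
    rw [EuclideanSpace.norm_single, norm_one, mul_one] at h1
    calc |pd p j| ≤ ‖fderiv ℝ u p‖ := by rw [← Real.norm_eq_abs]; exact h1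
    _ ≤ G₀ := hG₀ p hp
    _ ≤ G := le_max_left _ _
  -- choice of N
  set N : ℝ := max 0 (-Real.log (ε / (2 * (n * G + 1)))) with hN_def
  have hN0 : 0 ≤ N := le_max_left _ _
  have hNe : Real.exp (-N) ≤ ε / (2 * (n * G + 1)) := by
    have h1 : -N ≤ Real.log (ε / (2 * (n * G + 1))) := by
      have := le_max_right (0:ℝ) (-Real.log (ε / (2 * (n * G + 1))))
      simp only [hN_def]
      linarith [le_max_right (0:ℝ) (-Real.log (ε / (2 * (n * G + 1))))]
    calc Real.exp (-N) ≤ Real.exp (Real.log (ε / (2 * (n * G + 1)))) := Real.exp_le_exp.mpr h1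
    _ = ε / (2 * (n * G + 1)) := Real.exp_log (by positivity)
  -- choice of L
  obtain ⟨L, hL0, hLlive⟩ : ∃ L : ℝ, 0 ≤ L ∧ ∀ j, x j ≠ 0 → G * Real.exp (-L) < x j := by
    by_cases hne : (Finset.univ.filter (fun j : Fin n => x j ≠ 0)).Nonempty
    · have hne' : ((Finset.univ.filter (fun j : Fin n => x j ≠ 0)).image x).Nonempty :=
        hne.image x
      set ξ : ℝ := ((Finset.univ.filter (fun j : Fin n => x j ≠ 0)).image x).min' hne' with hξ
      have hξmem := ((Finset.univ.filter (fun j : Fin n => x j ≠ 0)).image x).min'_mem hne'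
      obtain ⟨j₀, hj₀, hj₀eq⟩ := Finset.mem_image.mp hξmem
      have hj₀ne : x j₀ ≠ 0 := (Finset.mem_filter.mp hj₀).2
      have hξpos : 0 < ξ := by
        rw [hξ, ← hj₀eq]; exact lt_of_le_of_ne (hx j₀) (Ne.symm hj₀ne)
      have hξle : ∀ j, x j ≠ 0 → ξ ≤ x j := fun j hj =>
        Finset.min'_le _ _ (Finset.mem_image_of_mem x
          (Finset.mem_filter.mpr ⟨Finset.mem_univ j, hj⟩))
      refine ⟨max 0 (-Real.log (ξ / (G + 1))), le_max_left _ _, fun j hj => ?_⟩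
      have h1 : -(max 0 (-Real.log (ξ / (G + 1)))) ≤ Real.log (ξ / (G + 1)) := by
        linarith [le_max_right (0:ℝ) (-Real.log (ξ / (G + 1)))]
      have h2 : Real.exp (-(max 0 (-Real.log (ξ / (G + 1))))) ≤ ξ / (G + 1) := by
        calc Real.exp (-(max 0 (-Real.log (ξ / (G + 1)))))
            ≤ Real.exp (Real.log (ξ / (G + 1))) := Real.exp_le_exp.mpr h1
        _ = ξ / (G + 1) := Real.exp_log (by positivity)
      have h3 : G * Real.exp (-(max 0 (-Real.log (ξ / (G + 1))))) ≤ G * (ξ / (G + 1)) :=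
        mul_le_mul_of_nonneg_left h2 hG0
      have h4 : G * (ξ / (G + 1)) < ξ := by
        have hlt : G / (G + 1) < 1 := (div_lt_one (by positivity)).mpr (by linarith)
        have heq2 : G * (ξ / (G + 1)) = G / (G + 1) * ξ := by ring
        rw [heq2]
        nlinarith [hξpos, hlt]
      calc G * Real.exp (-(max 0 (-Real.log (ξ / (G + 1))))) ≤ G * (ξ / (G + 1)) := h3
      _ < ξ := h4
      _ ≤ x j := hξle j hj
    · exact ⟨0, le_refl 0, fun j hj =>
        absurd (Finset.mem_filter.mpr ⟨Finset.mem_univ j, hj⟩) (fun h => hne ⟨j, h⟩)⟩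
  -- the box and the maximizer
  set T : En n → En n := fun z => (fun k => Real.exp (if x k = 0 then -N else z k)) with hT_def
  have hTpos : ∀ z k, 0 < T z k := fun z k => Real.exp_pos _
  set Box : Set (En n) := {z : En n | ∀ k, z k ∈ Set.Icc (-L - 1) R} with hBox_def
  have h0B : (0 : En n) ∈ Box := by
    intro k
    constructor <;> simp only [PiLp.zero_apply] <;> linarith
  have hTB : ∀ z ∈ Box, T z ∈ Bt := by
    intro z hz k
    refine ⟨(Real.exp_pos _).le, Real.exp_le_exp.mpr ?_⟩
    by_cases hk : x k = 0
    · rw [if_pos hk]; linarith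
    · rw [if_neg hk]; exact (hz k).2
  have hTcont : Continuous T := by
    refine (PiLp.continuous_toLp (p := 2) (β := fun _ : Fin n => ℝ)).comp ?_
    apply continuous_pi
    intro k
    apply Real.continuous_exp.comp
    by_cases hk : x k = 0
    · simp only [if_pos hk]; exact continuous_const
    · simp only [if_neg hk]; exact PiLp.continuous_apply (p := 2) (β := fun _ : Fin n => ℝ) k
  set ψ : En n → ℝ := fun z => ∑ j, x j * z j - u (T z) with hψ_def
  have hψc : Continuous ψ := by
    apply Continuous.sub
    · exact continuous_finset_sum _ fun j _ => continuous_const.mul (PiLp.continuous_apply (p := 2) (β := fun _ : Fin n => ℝ) j)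
    · exact hc.comp hTcont
  obtain ⟨zs, hzB, hzmax⟩ := (box_compact (-L - 1) R).exists_isMaxOn ⟨0, h0B⟩ hψc.continuousOn
  -- derivative of ψ along coordinate j
  have hgd : ∀ (j : Fin n), x j ≠ 0 → ∀ θ : ℝ,
      HasDerivAt (fun θ' => ψ (Function.update zs j θ'))
        (x j - Real.exp θ * pd (T (Function.update zs j θ)) j) θ := by
    intro j hj θ
    set ej : En n := EuclideanSpace.single j (1:ℝ) with hej
    set w : En n := WithLp.toLp 2 (Function.update (T zs) j 0) with hw
    have hTupd : ∀ θ' : ℝ, T (Function.update zs j θ') = w + Real.exp θ' • ej := by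
      intro θ'
      ext k
      simp only [PiLp.add_apply, PiLp.smul_apply, smul_eq_mul]
      by_cases hk : k = j
      · subst hk
        simp only [hT_def, Function.update_self, if_neg hj, hw, hej,
          EuclideanSpace.single_apply, if_pos rfl]
        norm_num
      · simp only [hT_def, Function.update_of_ne hk, hw, hej,
          EuclideanSpace.single_apply, if_neg hk]
        ring
    have hsum : ∀ θ' : ℝ, ∑ k, x k * (Function.update zs j θ') k
        = x j * θ' + ∑ k ∈ Finset.univ \ {j}, x k * zs k := by
      intro θ'
      have heq : (fun k => x k * (Function.update zs j θ') k)
          = Function.update (fun k => x k * zs k) j (x j * θ') := by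
        funext k
        by_cases hk : k = j
        · subst hk; simp [Function.update_self]
        · simp [Function.update_of_ne hk]
      calc ∑ k, x k * (Function.update zs j θ') k
          = ∑ k, Function.update (fun k => x k * zs k) j (x j * θ') k := by rw [heq]
      _ = x j * θ' + ∑ k ∈ Finset.univ \ {j}, x k * zs k :=
          Finset.sum_update_of_mem (Finset.mem_univ j) _ _
    have hψeq : (fun θ' => ψ (Function.update zs j θ'))
        = fun θ' => x j * θ' + ∑ k ∈ Finset.univ \ {j}, x k * zs k
            - u (w + Real.exp θ' • ej) := by
      funext θ'
      simp only [hψ_def]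
      rw [hsum θ', hTupd θ']
    rw [hψeq, hTupd θ]
    have hcurve : HasDerivAt (fun θ' : ℝ => w + Real.exp θ' • ej) (Real.exp θ • ej) θ :=
      ((Real.hasDerivAt_exp θ).smul_const ej).const_add w
    have hu' : HasDerivAt (fun θ' : ℝ => u (w + Real.exp θ' • ej))
        (fderiv ℝ u (w + Real.exp θ • ej) (Real.exp θ • ej)) θ :=
      (hdiff _).hasFDerivAt.comp_hasDerivAt θ hcurve
    have hval : fderiv ℝ u (w + Real.exp θ • ej) (Real.exp θ • ej)
        = Real.exp θ * pd (w + Real.exp θ • ej) j := by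
      rw [map_smul, smul_eq_mul]
    rw [hval] at hu'
    have hlin : HasDerivAt (fun θ' : ℝ => x j * θ' + ∑ k ∈ Finset.univ \ {j}, x k * zs k)
        (x j) θ := by
      simpa using ((hasDerivAt_id θ).const_mul (x j)).add_const
        (∑ k ∈ Finset.univ \ {j}, x k * zs k)
    exact hlin.sub hu'
  -- live coordinates are < R
  have hltR : ∀ j, x j ≠ 0 → zs j < R := by
    intro j hj
    by_contra hcon
    push_neg at hcon
    have hzsR : zs j = R := le_antisymm (hzB j).2 hcon
    have hnorm : Real.exp R ≤ ‖T zs‖ := by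
      have h1 := coord_abs_le (T zs) j
      have h2 : T zs j = Real.exp (zs j) := by simp only [hT_def, if_neg hj]
      rw [h2, hzsR] at h1
      calc Real.exp R = |Real.exp R| := (abs_of_pos (Real.exp_pos R)).symm
      _ ≤ ‖T zs‖ := h1
    have hsum1 : ∑ k, x k * zs k ≤ Sx * R := by
      rw [hSx_def, Finset.sum_mul]
      exact Finset.sum_le_sum fun k _ => mul_le_mul_of_nonneg_left (hzB k).2 (hx k)
    have hu1 : (Sx + 1) * ‖T zs‖ - A ≤ u (T zs) := hA _
    have hu2 : (Sx + 1) * Real.exp R ≤ (Sx + 1) * ‖T zs‖ :=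
      mul_le_mul_of_nonneg_left hnorm (by linarith)
    have hψzs : ψ zs ≤ Sx * R - ((Sx + 1) * Real.exp R - A) := by
      simp only [hψ_def]; linarith
    have hψ0 : -D ≤ ψ 0 := by
      have hT0le : ∀ k, T 0 k ≤ 1 := by
        intro k
        have hle : (if x k = 0 then -N else (0:En n) k) ≤ 0 := by
          by_cases hk : x k = 0
          · rw [if_pos hk]; linarith
          · rw [if_neg hk]; simp
        calc T 0 k = Real.exp (if x k = 0 then -N else (0:En n) k) := rfl
        _ ≤ Real.exp 0 := Real.exp_le_exp.mpr hle
        _ = 1 := Real.exp_zero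
      have hmon := hmono (T 0) (WithLp.toLp 2 (fun _ => (1:ℝ))) (fun k => (Real.exp_pos _).le) hT0le
      have hud : u (WithLp.toLp 2 (fun _ => (1:ℝ))) ≤ D := le_abs_self _
      simp only [hψ_def]
      have hsum0 : ∑ k, x k * (0:En n) k = 0 := by simp
      rw [hsum0]
      linarith
    have hRe : R ≤ Real.exp R := by linarith [Real.add_one_le_exp R]
    have hψmax : ψ 0 ≤ ψ zs := hzmax h0B
    have hSR : Sx * R ≤ Sx * Real.exp R := mul_le_mul_of_nonneg_left hRe hSx0
    have hexpand : (Sx + 1) * Real.exp R = Sx * Real.exp R + Real.exp R := by ring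
    linarith
  -- live coordinates are ≥ -L
  have hgeL : ∀ j, x j ≠ 0 → -L ≤ zs j := by
    intro j hj
    by_contra hcon
    push_neg at hcon
    have hmono1 : StrictMonoOn (fun θ' => ψ (Function.update zs j θ'))
        (Set.Icc (zs j) (-L)) := by
      apply strictMonoOn_of_deriv_pos (convex_Icc _ _)
      · exact fun θ _ => ((hgd j hj θ).continuousAt).continuousWithinAt
      · intro θ hθ
        rw [interior_Icc] at hθ
        rw [(hgd j hj θ).deriv]
        have hupd : (WithLp.toLp 2 (Function.update zs j θ) : En n) ∈ Box := by
          intro k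
          by_cases hk : k = j
          · subst hk
            rw [PiLp.toLp_apply, Function.update_self]
            exact ⟨by linarith [(hzB k).1, hθ.1], by linarith [hθ.2]⟩
          · rw [PiLp.toLp_apply, Function.update_of_ne hk]; exact hzB k
        have hpdb := hpdG _ (hTB _ hupd) j
        have h1 : Real.exp θ * pd (T (Function.update zs j θ)) j ≤ G * Real.exp (-L) := by
          calc Real.exp θ * pd (T (Function.update zs j θ)) j
              ≤ Real.exp θ * G := mul_le_mul_of_nonneg_left
                ((le_abs_self _).trans hpdb) (Real.exp_pos θ).le
          _ = G * Real.exp θ := mul_comm _ _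
          _ ≤ G * Real.exp (-L) := mul_le_mul_of_nonneg_left
                (Real.exp_le_exp.mpr hθ.2.le) hG0
        linarith [hLlive j hj]
    have h1 : ψ (Function.update zs j (zs j)) < ψ (Function.update zs j (-L)) :=
      hmono1 ⟨le_refl _, hcon.le⟩ ⟨hcon.le, le_refl _⟩ hcon
    rw [Function.update_eq_self] at h1
    have hupd : (WithLp.toLp 2 (Function.update zs j (-L)) : En n) ∈ Box := by
      intro k
      by_cases hk : k = j
      · subst hk; rw [PiLp.toLp_apply, Function.update_self]; exact ⟨by linarith, by linarith⟩
      · rw [PiLp.toLp_apply, Function.update_of_ne hk]; exact hzB k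
    exact absurd (hzmax hupd) (not_le.mpr h1)
  -- stationarity
  have hstat : ∀ j, x j ≠ 0 → x j = Real.exp (zs j) * pd (T zs) j := by
    intro j hj
    have hloc : IsLocalMax (fun θ' => ψ (Function.update zs j θ')) (zs j) := by
      have hmem : Set.Ioo (-L - 1) R ∈ 𝓝 (zs j) :=
        Ioo_mem_nhds (by linarith [hgeL j hj]) (hltR j hj)
      filter_upwards [hmem] with θ hθ
      have hupd : (WithLp.toLp 2 (Function.update zs j θ) : En n) ∈ Box := by
        intro k
        by_cases hk : k = j
        · subst hk; rw [PiLp.toLp_apply, Function.update_self]; exact ⟨hθ.1.le, hθ.2.le⟩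
        · rw [PiLp.toLp_apply, Function.update_of_ne hk]; exact hzB k
      have h2 : ψ (Function.update zs j θ) ≤ ψ zs := hzmax hupd
      simpa [Function.update_eq_self] using h2
    have hd0 : deriv (fun θ' => ψ (Function.update zs j θ')) (zs j) = 0 :=
      hloc.deriv_eq_zero
    rw [(hgd j hj (zs j)).deriv, Function.update_eq_self] at hd0
    linarith
  -- assembly
  set t : En n := T zs with ht_def
  have htB : t ∈ Bt := hTB zs hzB
  set s : En n := WithLp.toLp 2 (fun j => pd t j) with hs_def
  have hslive : ∀ j, x j ≠ 0 → 0 < s j := by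
    intro j hj
    have hst := hstat j hj
    have hxj : 0 < x j := lt_of_le_of_ne (hx j) (Ne.symm hj)
    by_contra hcon
    push_neg at hcon
    have hcon2 : pd t j ≤ 0 := by rw [hs_def] at hcon; exact hcon
    nlinarith [Real.exp_pos (zs j), hst, hcon2, hxj]
  have hsnn : ∀ j, 0 ≤ s j := fun j =>
    partial_nonneg u hmono hdiff t (fun k => (hTpos zs k).le) j
  have hF : starC u s = ∑ j, s j * t j - u t := fenchel_eq u hconv hdiff t
  set sh : En n := WithLp.toLp 2 (fun k => if x k = 0 then 0 else s k) with hsh_def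
  obtain ⟨K', hK'0, hK'⟩ := starC_perturb u hc hsl sh
  set N' : ℝ := max 0 (-Real.log (ε / (2 * (K' + 1)))) with hN'_def
  have hN'0 : 0 ≤ N' := le_max_left _ _
  have hN'e : Real.exp (-N') ≤ ε / (2 * (K' + 1)) := by
    have h1 : -N' ≤ Real.log (ε / (2 * (K' + 1))) := by
      have h2 := le_max_right (0:ℝ) (-Real.log (ε / (2 * (K' + 1))))
      simp only [hN'_def]
      linarith [le_max_right (0:ℝ) (-Real.log (ε / (2 * (K' + 1))))]
    calc Real.exp (-N') ≤ Real.exp (Real.log (ε / (2 * (K' + 1)))) := Real.exp_le_exp.mpr h1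
    _ = ε / (2 * (K' + 1)) := Real.exp_log (by positivity)
  set a : En n := WithLp.toLp 2 (fun k => if x k = 0 then -N else zs k) with ha_def
  set b : En n := WithLp.toLp 2 (fun k => if x k = 0 then -N' else Real.log (s k)) with hb_def
  refine ⟨a, b, ?_⟩
  set s' : En n := WithLp.toLp 2 (fun k => Real.exp (b k)) with hs'_def
  have hexpa : expComp u a = u t := by
    simp only [expComp, ha_def, ht_def, hT_def]
  have hexpb : expComp (starC u) b = starC u s' := by
    simp only [expComp, hs'_def]
  have hperturb : starC u s' ≤ starC u sh + Real.exp (-N') * K' := by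
    apply hK' (Real.exp (-N')) (Real.exp_pos _)
    · calc Real.exp (-N') ≤ Real.exp 0 := Real.exp_le_exp.mpr (by linarith)
      _ = 1 := Real.exp_zero
    · intro k
      by_cases hk : x k = 0
      · constructor
        · simp only [hs'_def, hb_def, hsh_def, if_pos hk]
          exact (Real.exp_pos _).le
        · simp only [hs'_def, hb_def, hsh_def, if_pos hk, zero_add]
          exact le_refl _
      · have heq1 : s' k = s k := by
          simp only [hs'_def, hb_def, if_neg hk]
          exact Real.exp_log (hslive k hk)
        have heq2 : sh k = s k := by simp only [hsh_def, if_neg hk]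
        constructor
        · rw [heq1, heq2]
        · rw [heq1, heq2]; linarith [Real.exp_pos (-N')]
  have hmid : starC u sh ≤ starC u s := by
    apply starC_mono u hc habs hsl
    · intro j
      by_cases hj : x j = 0
      · simp only [hsh_def, if_pos hj]; exact le_refl 0
      · simp only [hsh_def, if_neg hj]; exact (hslive j hj).le
    · intro j
      by_cases hj : x j = 0
      · simp only [hsh_def, if_pos hj]; exact hsnn j
      · simp only [hsh_def, if_neg hj]; exact le_refl _
  have hstt : ∑ j, s j * t j = ∑ j, (if x j = 0 then s j * Real.exp (-N) else x j) := by
    apply Finset.sum_congr rfl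
    intro j _
    by_cases hj : x j = 0
    · rw [if_pos hj]
      have h1 : t j = Real.exp (-N) := by simp only [ht_def, hT_def, if_pos hj]
      rw [h1]
    · rw [if_neg hj]
      have h1 : t j = Real.exp (zs j) := by simp only [ht_def, hT_def, if_neg hj]
      rw [h1, mul_comm]
      exact (hstat j hj).symm
  have hsG : ∀ j, s j ≤ G := fun j => (le_abs_self _).trans (hpdG t htB j)
  have htermwise : ∀ j, (if x j ≠ 0 then x j * Real.log (x j) - x j else 0) - G * Real.exp (-N)
      ≤ x j * a j + x j * b j - (if x j = 0 then s j * Real.exp (-N) else x j) := by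
    intro j
    by_cases hj : x j = 0
    · rw [if_neg (by simp [hj]), if_pos hj]
      have h1 : s j * Real.exp (-N) ≤ G * Real.exp (-N) :=
        mul_le_mul_of_nonneg_right (hsG j) (Real.exp_pos _).le
      rw [hj]
      simp only [zero_mul, zero_add, zero_sub]
      linarith
    · rw [if_pos hj, if_neg hj]
      have h1 : a j = zs j := by simp only [ha_def, if_neg hj]
      have h2 : b j = Real.log (s j) := by simp only [hb_def, if_neg hj]
      have hlog : Real.log (x j) = zs j + Real.log (s j) := by
        rw [hstat j hj, Real.log_mul (Real.exp_ne_zero _) (hslive j hj).ne', Real.log_exp]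
      rw [h1, h2, hlog]
      have hge : (0:ℝ) ≤ G * Real.exp (-N) := by positivity
      nlinarith [hge]
  have hCsum : ∑ j ∈ Finset.univ.filter (fun j : Fin n => x j ≠ 0),
      (x j * Real.log (x j) - x j)
      = ∑ j, (if x j ≠ 0 then x j * Real.log (x j) - x j else 0) :=
    Finset.sum_filter _ _
  have hsum1 : (∑ j ∈ Finset.univ.filter (fun j : Fin n => x j ≠ 0),
        (x j * Real.log (x j) - x j)) - n * (G * Real.exp (-N))
      ≤ ∑ j, x j * a j + ∑ j, x j * b j - ∑ j, s j * t j := by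
    rw [hCsum, hstt]
    have hLHS : (∑ j, (if x j ≠ 0 then x j * Real.log (x j) - x j else 0))
        - n * (G * Real.exp (-N))
        = ∑ j, ((if x j ≠ 0 then x j * Real.log (x j) - x j else 0) - G * Real.exp (-N)) := by
      rw [Finset.sum_sub_distrib, Finset.sum_const, Finset.card_univ, Fintype.card_fin,
        nsmul_eq_mul]
    have hRHS : ∑ j, x j * a j + ∑ j, x j * b j
        - ∑ j, (if x j = 0 then s j * Real.exp (-N) else x j)
        = ∑ j, (x j * a j + x j * b j - (if x j = 0 then s j * Real.exp (-N) else x j)) := by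
      rw [← Finset.sum_add_distrib, ← Finset.sum_sub_distrib]
    rw [hLHS, hRHS]
    exact Finset.sum_le_sum fun j _ => htermwise j
  have hNbound : (n:ℝ) * (G * Real.exp (-N)) ≤ ε / 2 := by
    have hpos : (0:ℝ) < 2 * (n * G + 1) := by positivity
    have h1 : (n:ℝ) * G * Real.exp (-N) ≤ (n * G) * (ε / (2 * (n * G + 1))) :=
      mul_le_mul_of_nonneg_left hNe (by positivity)
    have h3 : ((n:ℝ) * G) / (2 * (n * G + 1)) ≤ 1 / 2 := by
      rw [div_le_div_iff₀ hpos (by norm_num)]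
      have : (0:ℝ) ≤ (n:ℝ) * G := by positivity
      linarith
    have h4 : ((n:ℝ) * G) * (ε / (2 * (n * G + 1)))
        = (((n:ℝ) * G) / (2 * (n * G + 1))) * ε := by ring
    have h5 : (((n:ℝ) * G) / (2 * (n * G + 1))) * ε ≤ (1 / 2) * ε :=
      mul_le_mul_of_nonneg_right h3 hε.le
    calc (n:ℝ) * (G * Real.exp (-N)) = (n:ℝ) * G * Real.exp (-N) := by ring
    _ ≤ (n * G) * (ε / (2 * (n * G + 1))) := h1
    _ = (((n:ℝ) * G) / (2 * (n * G + 1))) * ε := h4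
    _ ≤ (1 / 2) * ε := h5
    _ = ε / 2 := by ring
  have hN'bound : Real.exp (-N') * K' ≤ ε / 2 := by
    have hpos : (0:ℝ) < 2 * (K' + 1) := by positivity
    have h1 : Real.exp (-N') * K' ≤ (ε / (2 * (K' + 1))) * K' :=
      mul_le_mul_of_nonneg_right hN'e hK'0
    have h3 : K' / (2 * (K' + 1)) ≤ 1 / 2 := by
      rw [div_le_div_iff₀ hpos (by norm_num)]
      linarith
    have h4 : (ε / (2 * (K' + 1))) * K' = (K' / (2 * (K' + 1))) * ε := by ring
    have h5 : (K' / (2 * (K' + 1))) * ε ≤ (1 / 2) * ε :=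
      mul_le_mul_of_nonneg_right h3 hε.le
    calc Real.exp (-N') * K' ≤ (ε / (2 * (K' + 1))) * K' := h1
    _ = (K' / (2 * (K' + 1))) * ε := h4
    _ ≤ (1 / 2) * ε := h5
    _ = ε / 2 := by ring
  have hfin2 : starC u s' ≤ (∑ j, s j * t j - u t) + Real.exp (-N') * K' := by
    calc starC u s' ≤ starC u sh + Real.exp (-N') * K' := hperturb
    _ ≤ starC u s + Real.exp (-N') * K' := by linarith
    _ = (∑ j, s j * t j - u t) + Real.exp (-N') * K' := by rw [hF]
  rw [hexpa, hexpb]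
  linarith [hsum1, hNbound, hN'bound, hfin2]

lemma key_eq (u : En n → ℝ) (hc : Continuous u)
    (habs : ∀ x : En n, u x = u (fun j => |x j|))
    (hmono : ∀ x y : En n, (∀ j, 0 ≤ x j) → (∀ j, x j ≤ y j) → u x ≤ u y)
    (hsl : Tendsto (fun x : En n => u x / ‖x‖) (cocompact (En n)) atTop)
    (hC2 : ContDiff ℝ 2 u) (hconv : ConvexOn ℝ Set.univ u)
    (x : En n) (hx : ∀ j, 0 ≤ x j) :
    starC (expComp u) x + starC (expComp (starC u)) x =
      ∑ j ∈ Finset.univ.filter (fun j : Fin n => x j ≠ 0), (x j * Real.log (x j) - x j) := by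
  have hpair := pairing_bound u hc hsl x hx
  apply le_antisymm
  · have h1 : ∀ b : En n, starC (expComp u) x
        ≤ (∑ j ∈ Finset.univ.filter (fun j : Fin n => x j ≠ 0), (x j * Real.log (x j) - x j))
          - (∑ j, x j * b j - expComp (starC u) b) := by
      intro b
      apply starC_le
      intro a
      linarith [hpair a b]
    have h2 : starC (expComp (starC u)) x
        ≤ (∑ j ∈ Finset.univ.filter (fun j : Fin n => x j ≠ 0), (x j * Real.log (x j) - x j))
          - starC (expComp u) x := by
      apply starC_le
      intro b
      linarith [h1 b]
    linarith
  · apply le_of_forall_pos_le_add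
    intro ε hε
    obtain ⟨a, b, hab⟩ := lower_bound u hc habs hmono hsl hC2 hconv x hx ε hε
    have hba : BddAbove (Set.range fun a : En n => ∑ j, x j * a j - expComp u a) := by
      refine ⟨(∑ j ∈ Finset.univ.filter (fun j : Fin n => x j ≠ 0),
        (x j * Real.log (x j) - x j)) - (∑ j, x j * (0:En n) j - expComp (starC u) 0), ?_⟩
      rintro v ⟨a', rfl⟩
      show ∑ j, x j * a' j - expComp u a' ≤ _
      linarith [hpair a' 0]
    have hbb : BddAbove (Set.range fun b : En n => ∑ j, x j * b j - expComp (starC u) b) := by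
      refine ⟨(∑ j ∈ Finset.univ.filter (fun j : Fin n => x j ≠ 0),
        (x j * Real.log (x j) - x j)) - (∑ j, x j * (0:En n) j - expComp u 0), ?_⟩
      rintro v ⟨b', rfl⟩
      show ∑ j, x j * b' j - expComp (starC u) b' ≤ _
      linarith [hpair 0 b']
    have hfa := le_starC hba a
    have hgb := le_starC hbb b
    linarith

theorem stmt14 (n : ℕ) (u : En n → ℝ) (hu : IsA u)
    (hC2 : ContDiff ℝ 2 u) (hconv : ConvexOn ℝ Set.univ u) :
    (∀ x ∈ orthant n, x ≠ 0 →
      starC (expComp u) x + starC (expComp (starC u)) x =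
        ∑ j ∈ Finset.univ.filter (fun j : Fin n => x j ≠ 0),
          (x j * Real.log (x j) - x j)) ∧
    starC (expComp u) 0 + starC (expComp (starC u)) 0 = 0 := by
  obtain ⟨hc, habs, hmono, hsl⟩ := hu
  constructor
  · intro x hx _
    exact key_eq u hc habs hmono hsl hC2 hconv x hx
  · have h := key_eq u hc habs hmono hsl hC2 hconv 0 (fun j => by simp)
    rw [h]
    have hempty : Finset.univ.filter (fun j : Fin n => (0 : En n) j ≠ 0) = ∅ := by
      ext j; simp
    rw [hempty, Finset.sum_empty]
end
end

section
/- Let g ∈ ℬ([0,∞)ⁿ). Then: (1) (g[e])*(x) = +∞ for every x ∉ [0,∞)ⁿ; (2) (g[e])*(x) > −∞ for every x ∈ ℝⁿ; and (3) (g[e])*(x)/‖x‖ → +∞ as ‖x‖ → ∞ with x ∈ [0,∞)ⁿ. -/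
open Filter
open scoped BigOperators Topology

noncomputable section

/-- `g ∈ ℬ([0,∞)ⁿ)`: `g` is continuous on the orthant and `g(x)/‖x‖ → +∞`
as `x → ∞` within the orthant. -/
def memB {n : ℕ} (g : En n → ℝ) : Prop :=
  ContinuousOn g (orthant n) ∧
    Tendsto (fun x : En n => g x / ‖x‖) (cocompact (En n) ⊓ 𝓟 (orthant n)) atTop

/-- The Young–Fenchel conjugate of a real-valued function, with values in the
extended reals: `g*(x) = sup_y (⟨x,y⟩ - g(y)) ∈ [-∞,+∞]`. -/
def estar {n : ℕ} (g : En n → ℝ) (x : En n) : EReal :=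
  ⨆ y : En n, (((∑ j, x j * y j - g y : ℝ) : EReal))

lemma myNorm {n : ℕ} (x : En n) : ‖x‖ = Real.sqrt (∑ j, x j ^ 2) := by
  rw [EuclideanSpace.norm_eq]; simp [Real.norm_eq_abs, sq_abs]

lemma coord_le {n : ℕ} (y : En n) (j : Fin n) : |y j| ≤ ‖y‖ := by
  rw [myNorm, ← Real.sqrt_sq_eq_abs]
  exact Real.sqrt_le_sqrt (Finset.single_le_sum (fun i _ => sq_nonneg (y i)) (Finset.mem_univ j))

lemma orthant_closed (n : ℕ) : IsClosed (orthant n) := by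
  have : orthant n = ⋂ j, {x : En n | 0 ≤ x j} := by ext x; simp [orthant, Set.mem_iInter]
  rw [this]
  exact isClosed_iInter fun j => isClosed_le continuous_const (PiLp.continuous_apply 2 _ j)

lemma bound_on {n : ℕ} {g : En n → ℝ} (hc : ContinuousOn g (orthant n)) (M : ℝ) :
    ∃ C, 0 ≤ C ∧ ∀ z ∈ orthant n, ‖z‖ ≤ M → |g z| ≤ C := by
  have hK : IsCompact (orthant n ∩ Metric.closedBall 0 M) :=
    (isCompact_closedBall 0 M).of_isClosed_subset
      ((orthant_closed n).inter Metric.isClosed_closedBall) Set.inter_subset_right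
  obtain ⟨C, hC⟩ := hK.exists_bound_of_continuousOn (hc.mono Set.inter_subset_left)
  refine ⟨max C 0, le_max_right _ _, fun z hz hn => le_trans ?_ (le_max_left _ _)⟩
  simpa [Real.norm_eq_abs] using hC z ⟨hz, by simpa [Metric.mem_closedBall, dist_zero_right] using hn⟩

/-- finiteness bound: for `x` in the orthant, the conjugate of `g[e]` is bounded above. -/
lemma finite_bound {n : ℕ} {g : En n → ℝ} (hg : memB g) {x : En n} (hx : x ∈ orthant n) :
    ∃ B : ℝ, ∀ y : En n, ∑ j, x j * y j - expComp g y ≤ B := by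
  have hev : ∀ᶠ z in cocompact (En n) ⊓ 𝓟 (orthant n), ‖x‖ + 1 ≤ g z / ‖z‖ :=
    hg.2.eventually (eventually_ge_atTop _)
  rw [eventually_inf_principal] at hev
  obtain ⟨K, hKc, hKs⟩ := mem_cocompact.mp hev
  obtain ⟨M0, hM0⟩ := hKc.isBounded.subset_closedBall 0
  set M : ℝ := max M0 1 with hM
  have hM1 : (1:ℝ) ≤ M := le_max_right _ _
  have hbig : ∀ z ∈ orthant n, M < ‖z‖ → (‖x‖ + 1) * ‖z‖ ≤ g z := by
    intro z hz hzn
    have hzK : z ∉ K := by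
      intro h
      have hzb : ‖z‖ ≤ M0 := by simpa [dist_zero_right] using hM0 h
      have : M0 < ‖z‖ := lt_of_le_of_lt (le_max_left _ _) hzn
      linarith
    have h1 := hKs hzK hz
    have hzpos : (0:ℝ) < ‖z‖ := lt_of_le_of_lt (by linarith) hzn
    exact (le_div_iff₀ hzpos).mp h1
  obtain ⟨C, hC0, hC⟩ := bound_on hg.1 M
  refine ⟨max (‖x‖ * M + C) 0, fun y => ?_⟩
  set z : En n := WithLp.toLp 2 (fun j => Real.exp (y j)) with hzdef
  have hz : z ∈ orthant n := fun j => (Real.exp_pos _).le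
  have hxy : ∑ j, x j * y j ≤ ∑ j, x j * z j := by
    apply Finset.sum_le_sum
    intro j _
    have := Real.add_one_le_exp (y j)
    exact mul_le_mul_of_nonneg_left (by simpa [hzdef] using by linarith [Real.add_one_le_exp (y j)]) (hx j)
  have hinner : ∑ j, x j * z j ≤ ‖x‖ * ‖z‖ := by
    have := real_inner_le_norm x z
    simpa [PiLp.inner_apply, mul_comm] using this
  have hegz : expComp g y = g z := rfl
  rw [hegz]
  by_cases hcase : ‖z‖ ≤ M
  · have := hC z hz hcase
    have hxn : (0:ℝ) ≤ ‖x‖ := norm_nonneg _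
    have : ‖x‖ * ‖z‖ ≤ ‖x‖ * M := mul_le_mul_of_nonneg_left hcase hxn
    refine le_trans ?_ (le_max_left _ _)
    have habs := abs_le.mp (hC z hz hcase)
    linarith
  · push_neg at hcase
    have := hbig z hz hcase
    refine le_trans ?_ (le_max_right _ _)
    nlinarith [norm_nonneg z, norm_nonneg x]

theorem stmt16 (n : ℕ) (g : En n → ℝ) (hg : memB g) :
    (∀ x : En n, x ∉ orthant n → estar (expComp g) x = ⊤) ∧
    (∀ x : En n, ⊥ < estar (expComp g) x) ∧
    Tendsto (fun x : En n => (estar (expComp g) x).toReal / ‖x‖)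
      (cocompact (En n) ⊓ 𝓟 (orthant n)) atTop := by
  obtain ⟨Cu, hCu0, hCu⟩ := bound_on hg.1 (Real.sqrt n)
  have hbox : ∀ z : En n, z ∈ orthant n → (∀ j, z j ≤ 1) → ‖z‖ ≤ Real.sqrt n := by
    intro z hz h1
    rw [myNorm]
    have : ∑ j, z j ^ 2 ≤ (n : ℝ) := by
      calc ∑ j, z j ^ 2 ≤ ∑ j : Fin n, (1:ℝ) := Finset.sum_le_sum fun j _ => by
              nlinarith [hz j, h1 j]
        _ = n := by simp
    exact Real.sqrt_le_sqrt this
  refine ⟨?_, ?_, ?_⟩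
  · -- part 1
    intro x hx
    simp only [orthant, Set.mem_setOf_eq, not_forall, not_le] at hx
    obtain ⟨j0, hj0⟩ := hx
    rw [estar, iSup_eq_top]
    intro b hb
    obtain ⟨r, hbr, -⟩ := EReal.exists_between_coe_real hb
    set t : ℝ := max 0 ((r + Cu + 1) / (-x j0)) with ht
    have ht0 : 0 ≤ t := le_max_left _ _
    set y : En n := WithLp.toLp 2 (fun j => if j = j0 then -t else 0) with hy
    refine ⟨y, lt_trans hbr ?_⟩
    rw [EReal.coe_lt_coe_iff]
    have hsum : ∑ j, x j * y j = t * (-x j0) := by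
      simp only [hy, PiLp.toLp_apply, mul_ite, mul_zero]
      rw [Finset.sum_ite_eq' Finset.univ j0 (fun j => x j * -t)]
      simp; ring
    set z : En n := WithLp.toLp 2 (fun j => if j = j0 then Real.exp (-t) else 1) with hz
    have hey : expComp g y = g z := by
      unfold expComp
      congr 1
      rw [hz]; congr 1
      funext j
      show Real.exp (if j = j0 then -t else 0) = if j = j0 then Real.exp (-t) else 1
      by_cases h : j = j0 <;> simp [h]
    have hzo : z ∈ orthant n := by
      intro j
      show 0 ≤ (if j = j0 then Real.exp (-t) else 1)
      by_cases h : j = j0 <;> simp [h, (Real.exp_pos _).le]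
    have hz1 : ∀ j, z j ≤ 1 := by
      intro j
      show (if j = j0 then Real.exp (-t) else 1) ≤ 1
      by_cases h : j = j0 <;> simp [h, Real.exp_le_one_iff, neg_nonpos, ht0]
    have hgz := abs_le.mp (hCu z hzo (hbox z hzo hz1))
    have htge : (r + Cu + 1) ≤ t * (-x j0) := by
      have hpos : 0 < -x j0 := by linarith
      have : (r + Cu + 1) / (-x j0) ≤ t := le_max_right _ _
      calc r + Cu + 1 = ((r + Cu + 1) / (-x j0)) * (-x j0) :=
              (div_mul_cancel₀ (r + Cu + 1) hpos.ne').symm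
        _ ≤ t * (-x j0) := mul_le_mul_of_nonneg_right this hpos.le
    rw [hsum, hey]
    linarith [hgz.1, hgz.2]
  · -- part 2
    intro x
    exact lt_of_lt_of_le (EReal.bot_lt_coe _)
      (le_iSup (fun y : En n => ((∑ j, x j * y j - expComp g y : ℝ) : EReal)) 0)
  · -- part 3
    rw [tendsto_atTop]
    intro K
    set R : ℝ := max K 0 + 1 with hR
    have hR0 : 0 < R := by positivity
    obtain ⟨C, hC0, hC⟩ := bound_on hg.1 (Real.sqrt n * Real.exp R)
    have h1 : ∀ᶠ x : En n in cocompact (En n) ⊓ 𝓟 (orthant n), max 1 C ≤ ‖x‖ :=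
      (tendsto_norm_cocompact_atTop.eventually (eventually_ge_atTop _)).filter_mono inf_le_left
    have h2 : ∀ᶠ x : En n in cocompact (En n) ⊓ 𝓟 (orthant n), x ∈ orthant n :=
      (eventually_principal.mpr (fun x hx => hx)).filter_mono inf_le_right
    filter_upwards [h1, h2] with x hx1 hx2
    have hxpos : (0:ℝ) < ‖x‖ := lt_of_lt_of_le (lt_max_iff.mpr (Or.inl one_pos)) hx1
    have hxpos' : (1:ℝ) ≤ ‖x‖ := le_trans (le_max_left _ _) hx1
    have hCx : C ≤ ‖x‖ := le_trans (le_max_right _ _) hx1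
    set y : En n := (R / ‖x‖) • x with hy
    have hyj : ∀ j, y j = (R / ‖x‖) * x j := fun j => rfl
    have hyc : ∀ j, |y j| ≤ R := by
      intro j
      have : ‖y‖ = R := by
        rw [hy, norm_smul, Real.norm_eq_abs, abs_of_nonneg (by positivity)]
        field_simp
      exact this ▸ coord_le y j
    set z : En n := WithLp.toLp 2 (fun j => Real.exp (y j)) with hz
    have hzo : z ∈ orthant n := fun j => (Real.exp_pos _).le
    have hzn : ‖z‖ ≤ Real.sqrt n * Real.exp R := by
      rw [myNorm]
      have hle : ∑ j, z j ^ 2 ≤ ∑ j : Fin n, Real.exp R ^ 2 := by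
        apply Finset.sum_le_sum
        intro j _
        have : z j ≤ Real.exp R :=
          Real.exp_le_exp.mpr (le_trans (le_abs_self _) (hyc j))
        nlinarith [(Real.exp_pos (y j)).le]
      calc Real.sqrt (∑ j, z j ^ 2) ≤ Real.sqrt (∑ j : Fin n, Real.exp R ^ 2) :=
            Real.sqrt_le_sqrt hle
        _ = Real.sqrt (n * Real.exp R ^ 2) := by rw [Finset.sum_const]; simp [mul_comm]
        _ = Real.sqrt n * Real.exp R := by
            rw [Real.sqrt_mul (Nat.cast_nonneg n), Real.sqrt_sq (Real.exp_pos R).le]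
    have hgz := abs_le.mp (hC z hzo hzn)
    have hsum : ∑ j, x j * y j = R * ‖x‖ := by
      have : ∑ j, x j * y j = (R / ‖x‖) * ∑ j, x j ^ 2 := by
        rw [Finset.mul_sum]
        apply Finset.sum_congr rfl
        intro j _
        rw [hyj j]; ring
      rw [this]
      have hns : ∑ j, x j ^ 2 = ‖x‖ ^ 2 := by
        rw [myNorm, Real.sq_sqrt (Finset.sum_nonneg fun j _ => sq_nonneg _)]
      rw [hns]
      field_simp
    -- lower bound on estar and finiteness
    obtain ⟨B, hB⟩ := finite_bound hg hx2
    have htop : estar (expComp g) x ≤ (B : EReal) :=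
      iSup_le fun y' => EReal.coe_le_coe_iff.mpr (hB y')
    have hnetop : estar (expComp g) x ≠ ⊤ := (htop.trans_lt (EReal.coe_lt_top B)).ne
    have hlow : ((R * ‖x‖ - C : ℝ) : EReal) ≤ estar (expComp g) x := by
      refine le_trans ?_ (le_iSup (fun y' : En n => ((∑ j, x j * y' j - expComp g y' : ℝ) : EReal)) y)
      rw [EReal.coe_le_coe_iff, hsum]
      have : expComp g y = g z := rfl
      rw [this]
      linarith [hgz.2]
    have htor : R * ‖x‖ - C ≤ (estar (expComp g) x).toReal := by
      have := EReal.toReal_le_toReal hlow (EReal.coe_ne_bot _) hnetop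
      rwa [EReal.toReal_coe] at this
    rw [le_div_iff₀ hxpos]
    have hKR : K ≤ max K 0 := le_max_left _ _
    nlinarith [le_max_left K 0]
end
end

section
/- Let Φ = {φ_ν}_{ν=1}^∞ be a sequence of functions in 𝒜(ℝⁿ) satisfying condition (i₀): for each ν ∈ ℕ and each A > 0 there exists C_{ν,A} > 0 such that φ_ν(x) + A·ln(1+‖x‖) ≤ φ_{ν+1}(x) + C_{ν,A} for all x ∈ ℝⁿ. Set ψ_ν = φ_ν[e]. Then for each k ∈ ℕ and each A > 0 there exists a constant C > 0 such that for all x = (x₁,…,xₙ) ∈ [0,∞)ⁿ, (ψ_k*)*(x) + A·Σ_{j=1}^n x_j ≤ (ψ_{k+1}*)*(x) + C. -/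
open Filter
open scoped BigOperators Topology

noncomputable section

/-- Young–Fenchel conjugate with values in the extended reals. -/
def econj {n : ℕ} (g : En n → EReal) (x : En n) : EReal :=
  ⨆ y : En n, (((∑ j, x j * y j : ℝ) : EReal) - g y)

/-- The second Young–Fenchel conjugate `(ψ*)*` of a real-valued function `ψ`. -/
def ddconj {n : ℕ} (ψ : En n → ℝ) : En n → EReal :=
  econj (econj (fun y => ((ψ y : ℝ) : EReal)))

/-- Each coordinate is bounded by the Euclidean norm. -/
lemma abs_coord_le_norm {n : ℕ} (x : En n) (j : Fin n) : |x j| ≤ ‖x‖ := by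
  rw [EuclideanSpace.norm_eq]
  rw [show |x j| = Real.sqrt (‖x j‖^2) by rw [Real.sqrt_sq_eq_abs]; simp]
  apply Real.sqrt_le_sqrt
  exact Finset.single_le_sum (fun i _ => sq_nonneg ‖x i‖) (Finset.mem_univ j)

theorem stmt17 (n : ℕ) (φ : ℕ → En n → ℝ)
    (hA : ∀ ν, IsA (φ ν))
    (hi0 : ∀ ν : ℕ, ∀ A > (0:ℝ), ∃ C > (0:ℝ), ∀ x : En n,
      φ ν x + A * Real.log (1 + ‖x‖) ≤ φ (ν+1) x + C) :
    ∀ (k : ℕ), ∀ A > (0:ℝ), ∃ C > (0:ℝ), ∀ x ∈ orthant n,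
      ddconj (expComp (φ k)) x + ((A * ∑ j, x j : ℝ) : EReal) ≤
        ddconj (expComp (φ (k+1))) x + ((C : ℝ) : EReal) := by
  intro k A hApos
  obtain ⟨C, hCpos, hC⟩ := hi0 k ((n + 1) * A) (by positivity)
  refine ⟨C, hCpos, ?_⟩
  intro x _hx
  -- The key real inequality after exponential substitution.
  have key : ∀ t : En n,
      expComp (φ k) t + A * ∑ j, t j ≤ expComp (φ (k+1)) t + C := by
    intro t
    set et : En n := WithLp.toLp 2 (fun j => Real.exp (t j)) with het
    have h1 := hC et
    have hL0 : 0 ≤ Real.log (1 + ‖et‖) := by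
      apply Real.log_nonneg; have := norm_nonneg et; linarith
    have hsum : A * ∑ j, t j ≤ ((n : ℝ) + 1) * A * Real.log (1 + ‖et‖) := by
      have hterm : ∀ j : Fin n, t j ≤ Real.log (1 + ‖et‖) := by
        intro j
        have h2 : Real.exp (t j) ≤ 1 + ‖et‖ := by
          have : |et j| ≤ ‖et‖ := abs_coord_le_norm et j
          have h3 : et j = Real.exp (t j) := rfl
          rw [h3, abs_of_pos (Real.exp_pos _)] at this
          linarith
        calc t j = Real.log (Real.exp (t j)) := (Real.log_exp _).symm
          _ ≤ Real.log (1 + ‖et‖) := Real.log_le_log (Real.exp_pos _) h2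
      have hS : ∑ j, t j ≤ (n : ℝ) * Real.log (1 + ‖et‖) := by
        calc ∑ j, t j ≤ ∑ _j : Fin n, Real.log (1 + ‖et‖) :=
              Finset.sum_le_sum (fun j _ => hterm j)
          _ = (n : ℝ) * Real.log (1 + ‖et‖) := by
              simp [Finset.sum_const, mul_comm]
      calc A * ∑ j, t j ≤ A * ((n : ℝ) * Real.log (1 + ‖et‖)) := by
            exact mul_le_mul_of_nonneg_left hS hApos.le
        _ ≤ ((n : ℝ) + 1) * A * Real.log (1 + ‖et‖) := by nlinarith
    have hexp : expComp (φ k) t = φ k et := rfl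
    have hexp' : expComp (φ (k+1)) t = φ (k+1) et := rfl
    rw [hexp, hexp']
    linarith
  set ψk := expComp (φ k) with hψk
  set ψk1 := expComp (φ (k+1)) with hψk1
  set fk : En n → EReal := fun y => ((ψk y : ℝ) : EReal) with hfk
  set fk1 : En n → EReal := fun y => ((ψk1 y : ℝ) : EReal) with hfk1
  set r : ℝ := A * ∑ j, x j with hr
  -- Step 1: the conjugates satisfy `(fk1)*(y + A·1) ≤ (fk)*(y) + C`.
  have step1 : ∀ y : En n,
      econj fk1 (WithLp.toLp 2 (fun j => y j + A)) ≤ econj fk y + (C : EReal) := by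
    intro y
    apply iSup_le
    intro t
    have hreal : (∑ j, (fun j => y j + A) j * t j : ℝ) - ψk1 t
        ≤ (∑ j, y j * t j) - ψk t + C := by
      have hkey := key t
      have hsplit : (∑ j, (y j + A) * t j : ℝ)
          = (∑ j, y j * t j) + A * ∑ j, t j := by
        rw [Finset.mul_sum, ← Finset.sum_add_distrib]
        congr 1; ext j; ring
      simp only
      rw [hsplit]
      linarith
    calc (((∑ j, (fun j => y j + A) j * t j : ℝ) : EReal) - fk1 t)
        = (((∑ j, (fun j => y j + A) j * t j : ℝ) - ψk1 t : ℝ) : EReal) := by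
          rw [EReal.coe_sub]
      _ ≤ (((∑ j, y j * t j : ℝ) - ψk t + C : ℝ) : EReal) := by
          exact_mod_cast hreal
      _ = (((∑ j, y j * t j : ℝ) : EReal) - fk t) + (C : EReal) := by
          rw [← EReal.coe_sub, ← EReal.coe_add]
      _ ≤ econj fk y + (C : EReal) := by
          apply add_le_add_left
          exact le_iSup (fun y' => (((∑ j, y j * y' j : ℝ) : EReal) - fk y')) t
  -- Step 2: conclude at the level of second conjugates.
  show econj (econj fk) x + ((r : ℝ) : EReal) ≤ econj (econj fk1) x + (C : EReal)
  rw [← EReal.le_sub_iff_add_le (Or.inl (EReal.coe_ne_bot r)) (Or.inl (EReal.coe_ne_top r))]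
  apply iSup_le
  intro y
  rw [EReal.le_sub_iff_add_le (Or.inl (EReal.coe_ne_bot r)) (Or.inl (EReal.coe_ne_top r))]
  -- use the shifted point `y + A·1` in the outer supremum on the right
  set w : En n := WithLp.toLp 2 (fun j => y j + A) with hw
  have hinner : (∑ j, x j * w j : ℝ) = (∑ j, x j * y j) + r := by
    rw [hr, hw, Finset.mul_sum, ← Finset.sum_add_distrib]
    congr 1; ext j; simp; ring
  have h2 : (((∑ j, x j * y j : ℝ) : EReal) - econj fk y) + (r : EReal)
      ≤ ((∑ j, x j * w j : ℝ) : EReal) - econj fk1 w + (C : EReal) := by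
    have hE1 : econj fk1 w ≤ econj fk y + (C : EReal) := step1 y
    -- case on whether econj fk y is ⊤
    rcases eq_or_ne (econj fk y) ⊤ with htop | hne
    · rw [htop]
      rw [EReal.sub_top]
      simp
    · have hbot : econj fk y ≠ ⊥ := by
        have : (((∑ j, y j * (0 : En n) j : ℝ) : EReal) - fk 0) ≤ econj fk y :=
          le_iSup (fun t => (((∑ j, y j * t j : ℝ) : EReal) - fk t)) 0
        intro h
        rw [h, le_bot_iff] at this
        have : (((∑ j, y j * (0 : En n) j : ℝ) - ψk 0 : ℝ) : EReal) = ⊥ := by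
          rw [EReal.coe_sub]; exact this
        exact EReal.coe_ne_bot _ this
      lift econj fk y to ℝ using ⟨hne, hbot⟩ with b hb
      have hE1' : econj fk1 w ≤ ((b + C : ℝ) : EReal) := by
        rw [EReal.coe_add]; exact hE1
      rcases eq_or_ne (econj fk1 w) ⊥ with hbot1 | hne1
      · rw [hbot1]
        have : ((∑ j, x j * w j : ℝ) : EReal) - ⊥ = ⊤ := EReal.coe_sub_bot _
        rw [this]
        simp
      · have hne1' : econj fk1 w ≠ ⊤ := by
          intro h; rw [h] at hE1'; exact (EReal.coe_ne_top _) (top_le_iff.mp hE1')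
        lift econj fk1 w to ℝ using ⟨hne1', hne1⟩ with b1 hb1
        have hb1le : b1 ≤ b + C := by exact_mod_cast hE1'
        rw [← EReal.coe_sub, ← EReal.coe_sub, ← EReal.coe_add, ← EReal.coe_add]
        apply EReal.coe_le_coe_iff.mpr
        rw [hinner]
        linarith
  calc (((∑ j, x j * y j : ℝ) : EReal) - econj fk y) + (r : EReal)
      ≤ ((∑ j, x j * w j : ℝ) : EReal) - econj fk1 w + (C : EReal) := h2
    _ ≤ econj (econj fk1) x + (C : EReal) := by
        apply add_le_add_left
        exact le_iSup (fun t => (((∑ j, x j * t j : ℝ) : EReal) - econj fk1 t)) w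
end
end
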